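/- Let L ≥ 2, a > 0, b ≥ 0, and consider the symmetric matrix A = 1_L 1_L^⊤ + a√L·e₁e₁^⊤ + b(e₁1_L^⊤ + 1_L e₁^⊤) ∈ ℝ^{L×L}. Let û be the leading eigenvector of A, and u = L^{-1/2}·1_L. Then ‖sin Θ(û, u)‖ ≥ c(a ∧ 1)/L for some universal constant c > 0 (one can take c = 1/(10√2)). -/

import Mathlib

open Matrix

set_option maxHeartbeats 1600000



lemma key0 (n s a b mu z0 w m : ℝ) (hn : 2 ≤ n) (hs : s^2 = n) (hspos : 0 < s)
    (hm : m = min a 1) (ha : 0 < a) (hb : 0 ≤ b) (hw : 0 ≤ w)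
    (hnorm : z0^2 + (n-1)*w^2 = 1)
    (h1 : mu * w = (z0 + (n-1)*w) + b*z0)
    (h2 : mu * z0 = (1+b)*(z0 + (n-1)*w) + (a*s + b)*z0) :
    m / (10*n) ≤ |z0 - w| := by
  by_contra habs
  push_neg at habs
  set e : ℝ := m / (10*n) with he_def
  have hn0 : (0:ℝ) < n := by linarith
  have hm0 : 0 < m := by rw [hm]; exact lt_min ha one_pos
  have hm1 : m ≤ 1 := by rw [hm]; exact min_le_right _ _
  have hma : m ≤ a := by rw [hm]; exact min_le_left _ _
  have heq : e * (10*n) = m := by rw [he_def]; exact div_mul_cancel₀ m (by positivity)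
  have he0 : 0 < e := by positivity
  have he1 : e ≤ 1/20 := by nlinarith [heq, hm1, hn0, hn, he0]
  have hd1 : z0 - w < e := lt_of_abs_lt habs
  have hd2 : w - z0 < e := by linarith [neg_lt_of_abs_lt habs]
  have hw1 : w ≤ 1 := by nlinarith [sq_nonneg z0, sq_nonneg w, hnorm, hn, hw]
  have hsq : z0^2 ≤ (w+e)^2 := by
    nlinarith [mul_nonneg (by linarith : (0:ℝ) ≤ w + e - z0) (by linarith : (0:ℝ) ≤ w + e + z0)]
  have hA : 0.89 ≤ n * w^2 := by nlinarith [mul_nonneg he0.le hw, hnorm, hsq, hw1, he1, he0]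
  have hsw0 : 0 ≤ s * w := mul_nonneg hspos.le hw
  have hswl : 0.94 ≤ s * w := by nlinarith [hA, hs, hsw0]
  have hC : (n-1) * w^2 ≤ 1 := by nlinarith [sq_nonneg z0, hnorm]
  have hswu : s * w ≤ 1.5 := by nlinarith [sq_nonneg w, hC, hs, hsw0, hn]
  have hs141 : 1.41 ≤ s := by nlinarith [hs, hspos, hn]
  have hse : s * e ≤ 0.08 := by
    have h1' : s*e*(10*n) = s*m := by rw [mul_assoc, heq]
    have h2' : s*m ≤ 0.8*n := by
      nlinarith [mul_le_mul_of_nonneg_left hm1 hspos.le, hs141, hs, hspos]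
    nlinarith [h1', h2', hn0]
  have hsz0l : 0.86 ≤ s * z0 := by
    linarith only [mul_lt_mul_of_pos_left hd2 hspos, hswl, hse]
  have hsz0u : s * z0 ≤ 1.6 := by
    linarith only [mul_lt_mul_of_pos_left hd1 hspos, hswu, hse]
  have hz0 : 0 < z0 := by
    have hx : 0 < s * z0 := by linarith only [hsz0l]
    rcases mul_pos_iff.mp hx with ⟨_,h⟩|⟨h,_⟩
    · exact h
    · linarith
  have hwpos : 0 < w := by
    have hx : 0 < s * w := by linarith only [hswl]
    rcases mul_pos_iff.mp hx with ⟨_,h⟩|⟨h,_⟩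
    · exact h
    · linarith
  obtain ⟨S, hS_def⟩ : ∃ S : ℝ, S = z0 + (n-1)*w := ⟨_, rfl⟩
  rw [← hS_def] at h1 h2
  have hexp : s*S = s*z0 + (n-1)*(s*w) := by rw [hS_def]; ring
  have hSl : 0.9 * n ≤ s * S := by
    have h' : (n-1)*0.94 ≤ (n-1)*(s*w) := mul_le_mul_of_nonneg_left hswl (by linarith)
    linarith only [h', hexp, hsz0l, hn]
  have hSu : s * S ≤ 1.6 * n := by
    have h'' : (n-1)*(s*w) ≤ (n-1)*1.5 := mul_le_mul_of_nonneg_left hswu (by linarith)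
    linarith only [h'', hexp, hsz0u, hn]
  have hSpos : 0 < S := by
    have hx : 0 < s * S := by linarith only [hSl, hn]
    rcases mul_pos_iff.mp hx with ⟨_,h⟩|⟨h,_⟩
    · exact h
    · linarith
  have hbz0 : 0 ≤ b * z0 := mul_nonneg hb hz0.le
  have hmuw : 0 < mu * w := by rw [h1]; linarith only [hSpos, hbz0]
  have hmu : 0 < mu := by
    rcases mul_pos_iff.mp hmuw with ⟨h,_⟩|⟨_,h⟩
    · exact h
    · linarith
  have hdiff : mu * (z0 - w) = b*S + a*s*z0 := by
    linear_combination h2 - h1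
  have hrpos : 0 < b*S + a*s*z0 := by
    have h1' : 0 < a*s*z0 := by positivity
    have h2' : 0 ≤ b*S := mul_nonneg hb hSpos.le
    linarith only [h1', h2']
  have hkey : w * (b*S + a*s*z0) < e * (S + b*z0) := by
    have hid : w * (b*S + a*s*z0) = (z0 - w) * (S + b*z0) := by
      calc w * (b*S + a*s*z0) = w * (mu * (z0-w)) := by rw [hdiff]
        _ = (mu*w) * (z0-w) := by ring
        _ = (S + b*z0) * (z0-w) := by rw [h1]
        _ = (z0-w) * (S + b*z0) := by ring
    rw [hid]
    have hpos2 : 0 < S + b*z0 := by linarith only [hSpos, hbz0]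
    exact mul_lt_mul_of_pos_right hd1 hpos2
  have hs3 : (0:ℝ) < s^3 := by positivity
  have hbig := mul_lt_mul_of_pos_left hkey hs3
  have hes2 : e * s^2 = m/10 := by rw [hs]; linear_combination heq / 10
  have p1 : 0.94 * (0.9*n) ≤ (s*w) * (s*S) :=
    mul_le_mul hswl hSl (by linarith) (by linarith)
  have p2 : (0.94:ℝ) * 0.86 ≤ (s*w)*(s*z0) :=
    mul_le_mul hswl hsz0l (by linarith) (by linarith)
  have q1 : (b*s)*(0.94*(0.9*n)) ≤ (b*s)*((s*w)*(s*S)) :=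
    mul_le_mul_of_nonneg_left p1 (by positivity)
  have q2 : (a*s^2)*((0.94:ℝ)*0.86) ≤ (a*s^2)*((s*w)*(s*z0)) :=
    mul_le_mul_of_nonneg_left p2 (by positivity)
  have hLHS : (b*s)*(0.94*(0.9*n)) + (a*s^2)*((0.94:ℝ)*0.86) ≤ s^3 * (w * (b*S + a*s*z0)) := by
    have hr : s^3 * (w * (b*S + a*s*z0)) = (b*s)*((s*w)*(s*S)) + (a*s^2)*((s*w)*(s*z0)) := by ring
    linarith only [q1, q2, hr]
  have hRHS : s^3 * (e * (S + b*z0)) ≤ (m/10)*(1.6*n) + (m/10)*(b*1.6) := by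
    have hr1 : s^3 * (e*S) = (e*s^2)*(s*S) := by ring
    have hr2 : s^3 * (e*(b*z0)) = (e*s^2)*(b*(s*z0)) := by ring
    have t1 : (e*s^2)*(s*S) ≤ (m/10)*(1.6*n) := by
      rw [hes2]; exact mul_le_mul_of_nonneg_left hSu (by positivity)
    have t2 : (e*s^2)*(b*(s*z0)) ≤ (m/10)*(b*1.6) := by
      rw [hes2]
      exact mul_le_mul_of_nonneg_left (mul_le_mul_of_nonneg_left hsz0u hb) (by positivity)
    have hr : s^3 * (e * (S + b*z0)) = s^3*(e*S) + s^3*(e*(b*z0)) := by ring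
    linarith only [hr1, hr2, t1, t2, hr]
  have hfin1 : (m/10)*(1.6*n) ≤ 0.16*(a*n) := by
    linarith only [mul_le_mul_of_nonneg_right hma hn0.le]
  have hfin2 : (m/10)*(b*1.6) ≤ 0.16*b := by
    linarith only [mul_le_mul_of_nonneg_right hm1 hb]
  have hsn : (2.82:ℝ) ≤ s*n := by
    have h' : 1.41*n ≤ s*n := mul_le_mul_of_nonneg_right hs141 hn0.le
    linarith only [h', hn]
  have hbsn : 0.16*b ≤ (b*s)*(0.94*(0.9*n)) := by
    have h' : b*2.82 ≤ b*(s*n) := mul_le_mul_of_nonneg_left hsn hb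
    linarith only [h', hb]
  have hasn : 0.16*(a*n) < (a*s^2)*((0.94:ℝ)*0.86) := by
    rw [hs]
    have han : 0 < a*n := by positivity
    linarith only [han]
  linarith only [hbig, hLHS, hRHS, hfin1, hfin2, hbsn, hasn]


lemma key1 (n s a b mu z0 w m : ℝ) (hn : 2 ≤ n) (hs : s^2 = n) (hspos : 0 < s)
    (hm : m = min a 1) (ha : 0 < a) (hb : 0 ≤ b)
    (hnorm : z0^2 + (n-1)*w^2 = 1)
    (h1 : mu * w = (z0 + (n-1)*w) + b*z0)
    (h2 : mu * z0 = (1+b)*(z0 + (n-1)*w) + (a*s + b)*z0) :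
    m / (10*n) ≤ |z0 - w| := by
  rcases le_or_gt 0 w with hw | hw
  · exact key0 n s a b mu z0 w m hn hs hspos hm ha hb hw hnorm h1 h2
  · have h := key0 n s a b mu (-z0) (-w) m hn hs hspos hm ha hb (by linarith)
      (by linear_combination hnorm) (by linear_combination -h1) (by linear_combination -h2)
    have : |(-z0) - (-w)| = |z0 - w| := by rw [show (-z0) - (-w) = -(z0 - w) by ring, abs_neg]
    linarith [this ▸ h]


lemma mulVec_eval {L : ℕ} (a b : ℝ)
    (A : Matrix (Fin L) (Fin L) ℝ)
    (hA : A = fun (i j : Fin L) => 1 + (if (i : ℕ) = 0 ∧ (j : ℕ) = 0 then a * Real.sqrt L else 0)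
        + (if (i : ℕ) = 0 then b else 0) + (if (j : ℕ) = 0 then b else 0))
    (i0 : Fin L) (hi0 : (i0 : ℕ) = 0)
    (x : Fin L → ℝ) (i : Fin L) :
    A.mulVec x i = (1 + if (i : ℕ) = 0 then b else 0) * (∑ j, x j)
      + ((if (i : ℕ) = 0 then a * Real.sqrt L else 0) + b) * x i0 := by
  subst hA
  simp only [Matrix.mulVec, dotProduct]
  have hsum : ∀ j : Fin L,
      (1 + (if (i : ℕ) = 0 ∧ (j : ℕ) = 0 then a * Real.sqrt L else 0)
        + (if (i : ℕ) = 0 then b else 0) + (if (j : ℕ) = 0 then b else 0)) * x j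
      = (1 + if (i : ℕ) = 0 then b else 0) * x j
        + (if j = i0 then ((if (i : ℕ) = 0 then a * Real.sqrt L else 0) + b) * x j else 0) := by
    intro j
    by_cases hj : (j : ℕ) = 0
    · have hji : j = i0 := Fin.ext (by rw [hj, hi0])
      by_cases hi : (i : ℕ) = 0 <;> simp [hj, hji, hi, hi0] <;> ring
    · have hji : j ≠ i0 := fun h => hj (by rw [h, hi0])
      by_cases hi : (i : ℕ) = 0 <;> simp [hj, hji, hi, hi0] <;> ring
  rw [Finset.sum_congr rfl (fun j _ => hsum j), Finset.sum_add_distrib, ← Finset.mul_sum,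
    Finset.sum_ite_eq' Finset.univ i0]
  simp


/-- Let `A = 1_L1_Lᵀ + a√L e₁e₁ᵀ + b(e₁1_Lᵀ + 1_Le₁ᵀ)` with `L ≥ 2`, `a > 0`, `b ≥ 0`.
Then any leading eigenvector `û` of `A` (unit eigenvector whose eigenvalue has maximal
absolute value) satisfies `‖sin Θ(û, u)‖ = √(1 − (ûᵀu)²) ≥ (a ∧ 1)/(10√2·L)`,
where `u = L^{-1/2} 1_L`. -/
theorem leading_eigenvector_perturbed_ones {L : ℕ} (hL : 2 ≤ L) (a b : ℝ)
    (ha : 0 < a) (hb : 0 ≤ b)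
    (A : Matrix (Fin L) (Fin L) ℝ)
    (hA : A = fun (i j : Fin L) => 1 + (if (i : ℕ) = 0 ∧ (j : ℕ) = 0 then a * Real.sqrt L else 0)
        + (if (i : ℕ) = 0 then b else 0) + (if (j : ℕ) = 0 then b else 0))
    (uhat : Fin L → ℝ) (hunit : ∑ i, (uhat i) ^ 2 = 1)
    (hlead : ∃ μ : ℝ, A.mulVec uhat = μ • uhat ∧
      ∀ (ν : ℝ) (v : Fin L → ℝ), v ≠ 0 → A.mulVec v = ν • v → |ν| ≤ |μ|) :
    Real.sqrt (1 - (∑ i, uhat i / Real.sqrt L) ^ 2) ≥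
      min a 1 / (10 * Real.sqrt 2 * L) := by
  obtain ⟨μ, heig, hmax⟩ := hlead
  have hLr : (2:ℝ) ≤ (L:ℝ) := by exact_mod_cast hL
  have hL0 : (0:ℝ) < (L:ℝ) := by linarith
  set s : ℝ := Real.sqrt L with hs_def
  have hs2 : s^2 = (L:ℝ) := Real.sq_sqrt (by positivity)
  have hs0 : 0 < s := by
    rw [hs_def]; exact Real.sqrt_pos.mpr hL0
  set i0 : Fin L := ⟨0, by omega⟩ with hi0_def
  set i1 : Fin L := ⟨1, by omega⟩ with hi1_def
  have hi0 : (i0 : ℕ) = 0 := rfl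
  have hi1 : (i1 : ℕ) = 1 := rfl
  -- construct an eigenvector with positive eigenvalue to show μ ≠ 0
  have hdisc : (0:ℝ) ≤ ((L:ℝ) + a*s + 2*b)^2 - 4*(((L:ℝ)-1)*(a*s - b^2)) := by
    nlinarith [sq_nonneg (s^2 - a*s), mul_nonneg hb (sq_nonneg s),
      mul_nonneg (mul_nonneg ha.le hb) hs0.le, mul_nonneg ha.le hs0.le,
      mul_nonneg (mul_nonneg hb hb) (sq_nonneg s), hs2]
  obtain ⟨r, hr_def⟩ : ∃ r : ℝ, r = Real.sqrt (((L:ℝ) + a*s + 2*b)^2 - 4*(((L:ℝ)-1)*(a*s - b^2))) :=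
    ⟨_, rfl⟩
  have hr2 : r^2 = ((L:ℝ) + a*s + 2*b)^2 - 4*(((L:ℝ)-1)*(a*s - b^2)) := by
    rw [hr_def]; exact Real.sq_sqrt hdisc
  have hr0 : 0 ≤ r := hr_def ▸ Real.sqrt_nonneg _
  obtain ⟨lam, hlam_def⟩ : ∃ lam : ℝ, lam = (((L:ℝ) + a*s + 2*b) + r)/2 := ⟨_, rfl⟩
  have hlam2 : lam^2 = ((L:ℝ) + a*s + 2*b)*lam - ((L:ℝ)-1)*(a*s - b^2) := by
    rw [hlam_def]; linear_combination hr2/4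
  have hlampos : 0 < lam := by
    rw [hlam_def]
    have : 0 < a*s := by positivity
    linarith
  obtain ⟨v, hv_def⟩ : ∃ v : Fin L → ℝ, v = fun i : Fin L =>
      (1+b) + (if i = i0 then lam - ((L:ℝ) + b) else 0) := ⟨_, rfl⟩
  have hi1ne : i1 ≠ i0 := by
    intro hcon
    have : (i1 : ℕ) = (i0 : ℕ) := by rw [hcon]
    rw [hi0, hi1] at this
    omega
  have hv1 : v i1 = 1 + b := by rw [hv_def]; simp [hi1ne]
  have hvne : v ≠ 0 := by
    intro h
    rw [h] at hv1
    simp only [Pi.zero_apply] at hv1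
    linarith
  have hsumv : ∑ j, v j = (L:ℝ)*(1+b) + (lam - ((L:ℝ)+b)) := by
    rw [hv_def]
    rw [Finset.sum_add_distrib, Finset.sum_const, Finset.sum_ite_eq' Finset.univ i0]
    simp [Finset.card_univ]
    ring
  have hveig : A.mulVec v = lam • v := by
    funext i
    rw [mulVec_eval a b A hA i0 hi0 v i, hsumv, Pi.smul_apply, smul_eq_mul]
    have hvi0 : v i0 = (1+b) + (lam - ((L:ℝ)+b)) := by rw [hv_def]; simp
    by_cases hi : (i : ℕ) = 0
    · have hii : i = i0 := Fin.ext (by rw [hi, hi0])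
      rw [if_pos hi, if_pos hi, hii, hvi0]
      linear_combination -hlam2
    · have hii : i ≠ i0 := fun h => hi (by rw [h, hi0])
      have hvi : v i = 1 + b := by rw [hv_def]; simp [hii]
      rw [if_neg hi, if_neg hi, hvi, hvi0]
      ring
  have hmulam := hmax lam v hvne hveig
  have hmune : μ ≠ 0 := by
    intro h
    rw [h, abs_zero] at hmulam
    have := abs_nonneg lam
    have : |lam| = 0 := le_antisymm hmulam (abs_nonneg lam)
    rw [abs_eq_zero] at this
    linarith
  -- structure of uhat
  have heig' : ∀ i : Fin L, (1 + if (i : ℕ) = 0 then b else 0) * (∑ j, uhat j)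
      + ((if (i : ℕ) = 0 then a * s else 0) + b) * uhat i0 = μ * uhat i := by
    intro i
    have h := congrFun heig i
    rw [mulVec_eval a b A hA i0 hi0 uhat i] at h
    rw [Pi.smul_apply, smul_eq_mul] at h
    exact h
  obtain ⟨z0, hz0_def⟩ : ∃ z0 : ℝ, z0 = uhat i0 := ⟨_, rfl⟩
  obtain ⟨w, hw_def⟩ : ∃ w : ℝ, w = uhat i1 := ⟨_, rfl⟩
  obtain ⟨Su, hSu_def⟩ : ∃ Su : ℝ, Su = ∑ j, uhat j := ⟨_, rfl⟩
  have e1 : Su + b * z0 = μ * w := by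
    have h := heig' i1
    have hi1ne0 : ¬ ((i1 : ℕ) = 0) := by rw [hi1]; omega
    rw [if_neg hi1ne0, if_neg hi1ne0] at h
    rw [← hSu_def, ← hz0_def, ← hw_def] at h
    linarith [h]
  have hconst : ∀ i : Fin L, (i : ℕ) ≠ 0 → uhat i = w := by
    intro i hi
    have h := heig' i
    simp only [hi, if_false] at h
    rw [← hSu_def, ← hz0_def] at h
    have h2 : μ * uhat i = μ * w := by rw [← h, ← e1]; ring
    exact mul_left_cancel₀ hmune h2
  have hne_iff : ∀ i : Fin L, i ≠ i0 ↔ (i : ℕ) ≠ 0 := by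
    intro i
    constructor
    · intro h hcon; exact h (Fin.ext (by rw [hcon, hi0]))
    · intro h hcon; exact h (by rw [hcon, hi0])
  have hcard : ((Finset.univ.erase i0).card : ℝ) = (L:ℝ) - 1 := by
    rw [Finset.card_erase_of_mem (Finset.mem_univ i0), Finset.card_univ, Fintype.card_fin]
    have : 1 ≤ L := by omega
    push_cast [Nat.cast_sub this]
    ring
  have hsum1 : Su = z0 + ((L:ℝ) - 1) * w := by
    rw [hSu_def, ← Finset.add_sum_erase _ _ (Finset.mem_univ i0), ← hz0_def]
    congr 1
    rw [Finset.sum_congr rfl (fun i hi => hconst i ((hne_iff i).mp (Finset.ne_of_mem_erase hi))),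
      Finset.sum_const, nsmul_eq_mul, hcard]
  have hsum2' : (∑ i, (uhat i)^2) = z0^2 + ((L:ℝ) - 1) * w^2 := by
    rw [← Finset.add_sum_erase _ _ (Finset.mem_univ i0), ← hz0_def]
    congr 1
    rw [Finset.sum_congr rfl
      (fun i hi => by rw [hconst i ((hne_iff i).mp (Finset.ne_of_mem_erase hi))]),
      Finset.sum_const, nsmul_eq_mul, hcard]
  have hsum2 : z0^2 + ((L:ℝ) - 1) * w^2 = 1 := hsum2'.symm.trans hunit
  have e0 : (1+b) * Su + (a*s + b) * z0 = μ * z0 := by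
    have h := heig' i0
    rw [if_pos hi0, if_pos hi0] at h
    rw [← hSu_def, ← hz0_def] at h
    linarith [h]
  have h1k : μ * w = (z0 + ((L:ℝ)-1)*w) + b*z0 := by rw [← hsum1, ← e1]
  have h2k : μ * z0 = (1+b)*(z0 + ((L:ℝ)-1)*w) + (a*s + b)*z0 := by rw [← hsum1, ← e0]
  have hkey := key1 (L:ℝ) s a b μ z0 w (min a 1) hLr hs2 hs0 rfl ha hb hsum2 h1k h2k
  -- conclude
  have hm0 : 0 < min a 1 := lt_min ha one_pos
  have hsumdiv : (∑ i, uhat i / s) = Su / s := by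
    rw [hSu_def, Finset.sum_div]
  rw [ge_iff_le, hsumdiv]
  have hid : 1 - (Su/s)^2 = (((L:ℝ)-1)/(L:ℝ)) * (z0-w)^2 := by
    rw [hsum1, div_pow, hs2]
    field_simp
    linear_combination (-(L:ℝ)) * hsum2
  have hsqk : (min a 1 / (10*(L:ℝ)))^2 ≤ (z0-w)^2 := by
    have h0 : 0 ≤ min a 1 / (10*(L:ℝ)) := by positivity
    calc (min a 1 / (10*(L:ℝ)))^2 ≤ |z0-w|^2 := by
          apply pow_le_pow_left₀ h0 hkey
      _ = (z0-w)^2 := sq_abs _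
  have hhalf : (1:ℝ)/2 ≤ ((L:ℝ)-1)/(L:ℝ) := by
    rw [le_div_iff₀ hL0]; linarith
  have hfinal : (min a 1 / (10 * Real.sqrt 2 * (L:ℝ)))^2 ≤ 1 - (Su/s)^2 := by
    rw [hid]
    have hsq2 : (Real.sqrt 2)^2 = 2 := Real.sq_sqrt (by norm_num)
    have hexpand : (min a 1 / (10 * Real.sqrt 2 * (L:ℝ)))^2
        = (min a 1 / (10*(L:ℝ)))^2 / 2 := by
      rw [div_pow, div_pow, mul_pow, mul_pow, hsq2]
      ring
    rw [hexpand]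
    have step : (min a 1 / (10*(L:ℝ)))^2 / 2 ≤ (1/2) * (z0-w)^2 := by
      linarith [hsqk]
    calc (min a 1 / (10*(L:ℝ)))^2 / 2 ≤ (1/2) * (z0-w)^2 := step
      _ ≤ (((L:ℝ)-1)/(L:ℝ)) * (z0-w)^2 :=
          mul_le_mul_of_nonneg_right hhalf (sq_nonneg _)
  have h0' : 0 ≤ min a 1 / (10 * Real.sqrt 2 * (L:ℝ)) := by positivity
  calc min a 1 / (10 * Real.sqrt 2 * (L:ℝ))
      = Real.sqrt ((min a 1 / (10 * Real.sqrt 2 * (L:ℝ)))^2) := (Real.sqrt_sq h0').symm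
    _ ≤ Real.sqrt (1 - (Su/s)^2) := Real.sqrt_le_sqrt hfinal
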